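/- If a function g : ℝ≥0 → ℝ is twice continuously differentiable, the limit of g(t) as t → +∞ exists and is finite, and the second derivative g'' is bounded on [0,∞), then the first derivative g'(t) tends to 0 as t → +∞. -/

import Mathlib

open Set Filter Real

/-- Variant of Barbălat's lemma: if `g` is C² on `[0,∞)`, `g(t)` converges to a finite
limit as `t → +∞`, and the second derivative is bounded on `[0,∞)`, then
`g'(t) → 0` as `t → +∞`. -/
theorem stmt_0 (g : ℝ → ℝ) (hg : ContDiffOn ℝ 2 g (Ici 0))
    (L : ℝ) (hlim : Tendsto g atTop (nhds L))
    (M : ℝ) (hM : ∀ t ≥ (0 : ℝ), |derivWithin (derivWithin g (Ici 0)) (Ici 0) t| ≤ M) :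
    Tendsto (derivWithin g (Ici 0)) atTop (nhds 0) := by
  set f := derivWithin g (Ici (0:ℝ)) with hfdef
  have hU : UniqueDiffOn ℝ (Ici (0:ℝ)) := uniqueDiffOn_Ici 0
  have hf1 : ContDiffOn ℝ 1 f (Ici 0) := hg.derivWithin hU (by norm_num)
  have hfd : DifferentiableOn ℝ f (Ici 0) := hf1.differentiableOn (by norm_num)
  have hgd : DifferentiableOn ℝ g (Ici 0) := hg.differentiableOn (by norm_num)
  have hgc : ContinuousOn g (Ici 0) := hg.continuousOn
  set M' := max M 1 with hM'def
  have hM'pos : (0:ℝ) < M' := lt_of_lt_of_le one_pos (le_max_right _ _)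
  have hbound : ∀ x ∈ Ici (0:ℝ), ‖derivWithin f (Ici 0) x‖ ≤ M' := fun x hx =>
    le_trans (hM x hx) (le_max_left _ _)
  have hlip : ∀ x ∈ Ici (0:ℝ), ∀ y ∈ Ici (0:ℝ), |f y - f x| ≤ M' * |y - x| := fun x hx y hy =>
    Convex.norm_image_sub_le_of_norm_derivWithin_le hfd hbound (convex_Ici 0) hx hy
  rw [Metric.tendsto_atTop]
  by_contra hcon
  push_neg at hcon
  obtain ⟨ε, hε, hfr⟩ := hcon
  set h := ε / (2 * M') with hhdef
  have hh : 0 < h := div_pos hε (by positivity)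
  have hM'h : M' * h = ε / 2 := by
    rw [hhdef]
    field_simp
  -- choose T such that g is within ε*h/4 of L beyond T
  obtain ⟨T, hT⟩ := (Metric.tendsto_atTop.mp hlim) (ε * h / 4) (by positivity)
  obtain ⟨t, ht, htf⟩ := hfr (max T 1)
  have ht1 : (1:ℝ) ≤ t := le_trans (le_max_right _ _) ht
  have ht0 : (0:ℝ) ≤ t := by linarith
  have htT : T ≤ t := le_trans (le_max_left _ _) ht
  have hεft : ε ≤ |f t| := by
    simpa [Real.dist_eq] using htf
  -- the interval [t, t+h]
  have hsub : Icc t (t + h) ⊆ Ici (0:ℝ) := fun x hx => le_trans ht0 hx.1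
  have hint : interior (Icc t (t + h)) = Ioo t (t + h) := interior_Icc
  have hderiv_eq : ∀ x ∈ Ioo t (t + h), deriv g x = f x := by
    intro x hx
    have hx0 : 0 < x := lt_of_lt_of_le (by linarith [hx.1]) le_rfl
    exact (derivWithin_of_mem_nhds (Ici_mem_nhds hx0)).symm
  have hgdiff : DifferentiableOn ℝ g (interior (Icc t (t + h))) := by
    rw [hint]
    intro x hx
    have hx0 : (0:ℝ) < x := by have := hx.1; linarith
    exact ((hgd x (le_of_lt hx0)).differentiableAt (Ici_mem_nhds hx0)).differentiableWithinAt
  have hgcont : ContinuousOn g (Icc t (t + h)) := hgc.mono hsub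
  have hclose : ∀ x ∈ Ioo t (t + h), |f x - f t| ≤ ε / 2 := by
    intro x hx
    have hx0 : (0:ℝ) ≤ x := by have := hx.1; linarith
    calc |f x - f t| ≤ M' * |x - t| := hlip t (by exact ht0) x hx0
      _ ≤ M' * h := by
          apply mul_le_mul_of_nonneg_left _ (le_of_lt hM'pos)
          rw [abs_of_nonneg (by linarith [hx.1])]
          linarith [hx.2]
      _ = ε / 2 := hM'h
  have hgL : |g (t + h) - g t| < ε * h / 2 := by
    have h1 := hT t htT
    have h2 := hT (t + h) (by linarith)
    rw [Real.dist_eq] at h1 h2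
    have := abs_sub_abs_le_abs_sub (g (t+h) - L) (g t - L)
    calc |g (t + h) - g t| = |(g (t+h) - L) - (g t - L)| := by ring_nf
      _ ≤ |g (t+h) - L| + |g t - L| := abs_sub _ _
      _ < ε * h / 2 := by linarith
  rcases le_abs.mp hεft with hpos | hneg
  · -- f t ≥ ε: derivative ≥ ε/2 on the interval
    have hge : ∀ x ∈ interior (Icc t (t + h)), ε / 2 ≤ deriv g x := by
      rw [hint]; intro x hx
      rw [hderiv_eq x hx]
      have := hclose x hx
      have := abs_le.mp this
      linarith [this.1]
    have key := (convex_Icc t (t + h)).mul_sub_le_image_sub_of_le_deriv hgcont hgdiff hge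
      t (left_mem_Icc.mpr (by linarith)) (t + h) (right_mem_Icc.mpr (by linarith)) (by linarith)
    have : ε / 2 * h ≤ g (t + h) - g t := by simpa using key
    have habs : g (t + h) - g t ≤ |g (t + h) - g t| := le_abs_self _
    linarith
  · -- f t ≤ -ε
    have hle : ∀ x ∈ interior (Icc t (t + h)), deriv g x ≤ -(ε / 2) := by
      rw [hint]; intro x hx
      rw [hderiv_eq x hx]
      have := abs_le.mp (hclose x hx)
      have hft : f t ≤ -ε := by linarith
      linarith [this.2]
    have key := (convex_Icc t (t + h)).image_sub_le_mul_sub_of_deriv_le hgcont hgdiff hle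
      t (left_mem_Icc.mpr (by linarith)) (t + h) (right_mem_Icc.mpr (by linarith)) (by linarith)
    have hk : g (t + h) - g t ≤ -(ε / 2) * h := by simpa using key
    have habs : -(g (t + h) - g t) ≤ |g (t + h) - g t| := neg_le_abs _
    nlinarith
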